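/- Let n ≥ 1 be an integer and let p, q, r be three pairwise distinct, non-collinear points of ℝ² all of whose coordinates are integers in {0, 1, …, n−1}. Let ε > 0. Let q' be a point of the segment [p, q] and r' a point of the segment [p, r] such that both q' and r' lie outside the box of radius ε centered on p (i.e., ‖q' − p‖_∞ > ε and ‖r' − p‖_∞ > ε). Then the Euclidean distance between q' and r' is at least ε/(2n²). -/

import Mathlib

lemma abs_coord_le_dist (x y : EuclideanSpace ℝ (Fin 2)) (i : Fin 2) :
    |x i - y i| ≤ dist x y := by
  rw [EuclideanSpace.dist_eq]
  have h1 : |x i - y i| ^ 2 ≤ ∑ j, dist (x j) (y j) ^ 2 := by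
    have := Finset.single_le_sum (f := fun j => dist (x j) (y j) ^ 2)
      (fun j _ => sq_nonneg _) (Finset.mem_univ i)
    simpa [Real.dist_eq, sq_abs] using this
  calc |x i - y i| = Real.sqrt (|x i - y i| ^ 2) := by
        rw [Real.sqrt_sq (abs_nonneg _)]
    _ ≤ _ := Real.sqrt_le_sqrt h1

lemma collinear_of_det (p q r : EuclideanSpace ℝ (Fin 2)) (hpq : p ≠ q)
    (key : (q 0 - p 0) * (r 1 - p 1) - (q 1 - p 1) * (r 0 - p 0) = 0) :
    Collinear ℝ ({p, q, r} : Set (EuclideanSpace ℝ (Fin 2))) := by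
  have hu : q - p ≠ 0 := sub_ne_zero_of_ne hpq.symm
  have hab : q 0 - p 0 ≠ 0 ∨ q 1 - p 1 ≠ 0 := by
    by_contra hc
    push_neg at hc
    apply hu
    ext i
    fin_cases i
    · simpa using hc.1
    · simpa using hc.2
  rw [collinear_iff_of_mem (Set.mem_insert p {q, r})]
  refine ⟨q - p, ?_⟩
  intro x hx
  simp only [Set.mem_insert_iff, Set.mem_singleton_iff] at hx
  have comp : ∀ (k : ℝ) (i : Fin 2),
      (k • (q - p) +ᵥ p) i = k * (q i - p i) + p i := by
    intro k i
    simp [vadd_eq_add, PiLp.add_apply, PiLp.smul_apply, PiLp.sub_apply, smul_eq_mul]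
  rcases hx with rfl | rfl | h
  · exact ⟨0, by simp⟩
  · exact ⟨1, by simp⟩
  · rcases hab with hA | hB
    · refine ⟨(r 0 - p 0) / (q 0 - p 0), ?_⟩
      rw [h]
      ext i
      rw [comp]
      fin_cases i
      all_goals simp only [Fin.zero_eta, Fin.mk_one]
      · field_simp
        ring
      · field_simp
        nlinarith [key]
    · refine ⟨(r 1 - p 1) / (q 1 - p 1), ?_⟩
      rw [h]
      ext i
      rw [comp]
      fin_cases i
      all_goals simp only [Fin.zero_eta, Fin.mk_one]
      · field_simp
        nlinarith [key]
      · field_simp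
        ring

set_option maxHeartbeats 1000000 in
/-- Lemma 4 of the paper: two segments of an integer-coordinate drawing
sharing the endpoint `p` stay at Euclidean distance at least `ε/(2n²)` from
each other once outside the box of radius `ε` (for the sup norm) around `p`. -/
theorem stmt3 (n : ℕ) (hn : 1 ≤ n) (p q r : EuclideanSpace ℝ (Fin 2))
    (hp : ∀ i, ∃ k : ℕ, k < n ∧ p i = k)
    (hq : ∀ i, ∃ k : ℕ, k < n ∧ q i = k)
    (hr : ∀ i, ∃ k : ℕ, k < n ∧ r i = k)
    (hpq : p ≠ q) (hpr : p ≠ r) (hqr : q ≠ r)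
    (hncol : ¬ Collinear ℝ ({p, q, r} : Set (EuclideanSpace ℝ (Fin 2))))
    (ε : ℝ) (hε : 0 < ε)
    (q' r' : EuclideanSpace ℝ (Fin 2))
    (hq' : q' ∈ segment ℝ p q) (hr' : r' ∈ segment ℝ p r)
    (hq'out : ε < max |q' 0 - p 0| |q' 1 - p 1|)
    (hr'out : ε < max |r' 0 - p 0| |r' 1 - p 1|) :
    ε / (2 * n ^ 2) ≤ dist q' r' := by
  obtain ⟨kp0, hkp0n, hkp0⟩ := hp 0
  obtain ⟨kp1, hkp1n, hkp1⟩ := hp 1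
  obtain ⟨kq0, hkq0n, hkq0⟩ := hq 0
  obtain ⟨kq1, hkq1n, hkq1⟩ := hq 1
  obtain ⟨kr0, hkr0n, hkr0⟩ := hr 0
  obtain ⟨kr1, hkr1n, hkr1⟩ := hr 1
  have hnR : (0:ℝ) < n := by exact_mod_cast hn
  -- coordinate bounds
  have cb : ∀ (a b : ℕ), a < n → b < n → |(a:ℝ) - b| ≤ n := by
    intro a b haa hbb
    have h1 : (a:ℝ) < n := by exact_mod_cast haa
    have h2 : (b:ℝ) < n := by exact_mod_cast hbb
    have h3 : (0:ℝ) ≤ a := Nat.cast_nonneg _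
    have h4 : (0:ℝ) ≤ b := Nat.cast_nonneg _
    rw [abs_le]; constructor <;> linarith
  have hbq0 : |q 0 - p 0| ≤ n := by rw [hkq0, hkp0]; exact cb _ _ hkq0n hkp0n
  have hbq1 : |q 1 - p 1| ≤ n := by rw [hkq1, hkp1]; exact cb _ _ hkq1n hkp1n
  have hbr0 : |r 0 - p 0| ≤ n := by rw [hkr0, hkp0]; exact cb _ _ hkr0n hkp0n
  have hbr1 : |r 1 - p 1| ≤ n := by rw [hkr1, hkp1]; exact cb _ _ hkr1n hkp1n
  -- determinant
  set Dz : ℤ := ((kq0:ℤ) - kp0) * ((kr1:ℤ) - kp1) - ((kq1:ℤ) - kp1) * ((kr0:ℤ) - kp0)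
    with hDzdef
  have hDcast : (Dz:ℝ) = (q 0 - p 0) * (r 1 - p 1) - (q 1 - p 1) * (r 0 - p 0) := by
    rw [hkq0, hkq1, hkp0, hkp1, hkr0, hkr1, hDzdef]; push_cast; ring
  have hDne : Dz ≠ 0 := by
    intro h0
    apply hncol
    apply collinear_of_det p q r hpq
    rw [← hDcast, h0]
    norm_num
  have hD1 : (1:ℝ) ≤ |(Dz:ℝ)| := by
    have := Int.one_le_abs hDne
    exact_mod_cast this
  -- segment parametrizations
  rw [segment_eq_image'] at hq' hr'
  obtain ⟨s, ⟨hs0, hs1⟩, hq'eq⟩ := hq'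
  obtain ⟨t, ⟨ht0, ht1⟩, hr'eq⟩ := hr'
  have hq'c : ∀ i, q' i - p i = s * (q i - p i) := by
    intro i
    rw [← hq'eq]
    simp [PiLp.add_apply, PiLp.smul_apply, PiLp.sub_apply, smul_eq_mul]
  have hr'c : ∀ i, r' i - p i = t * (r i - p i) := by
    intro i
    rw [← hr'eq]
    simp [PiLp.add_apply, PiLp.smul_apply, PiLp.sub_apply, smul_eq_mul]
  -- ε < s * n
  have hsn : ε < s * n := by
    apply lt_of_lt_of_le hq'out
    apply max_le
    · rw [hq'c 0, abs_mul, abs_of_nonneg hs0]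
      exact mul_le_mul_of_nonneg_left hbq0 hs0
    · rw [hq'c 1, abs_mul, abs_of_nonneg hs0]
      exact mul_le_mul_of_nonneg_left hbq1 hs0
  -- algebraic identity
  have e1 : s * ((q 0 - p 0) * (r 1 - p 1) - (q 1 - p 1) * (r 0 - p 0)) =
      (q' 0 - r' 0) * (r 1 - p 1) - (q' 1 - r' 1) * (r 0 - p 0) := by
    have e00 : q' 0 - r' 0 = s * (q 0 - p 0) - t * (r 0 - p 0) := by
      have := hq'c 0; have := hr'c 0; linarith
    have e11 : q' 1 - r' 1 = s * (q 1 - p 1) - t * (r 1 - p 1) := by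
      have := hq'c 1; have := hr'c 1; linarith
    rw [e00, e11]; ring
  have hA : |q' 0 - r' 0| ≤ dist q' r' := abs_coord_le_dist q' r' 0
  have hB : |q' 1 - r' 1| ≤ dist q' r' := abs_coord_le_dist q' r' 1
  have hKey : s * |(Dz:ℝ)| ≤ 2 * n * dist q' r' := by
    rw [hDcast]
    calc s * |(q 0 - p 0) * (r 1 - p 1) - (q 1 - p 1) * (r 0 - p 0)|
        = |s * ((q 0 - p 0) * (r 1 - p 1) - (q 1 - p 1) * (r 0 - p 0))| := by
          rw [abs_mul, abs_of_nonneg hs0]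
      _ = |(q' 0 - r' 0) * (r 1 - p 1) - (q' 1 - r' 1) * (r 0 - p 0)| := by rw [e1]
      _ ≤ |(q' 0 - r' 0) * (r 1 - p 1)| + |(q' 1 - r' 1) * (r 0 - p 0)| := abs_sub _ _
      _ ≤ dist q' r' * n + dist q' r' * n := by
          gcongr
          · rw [abs_mul]
            exact mul_le_mul hA hbr1 (abs_nonneg _) dist_nonneg
          · rw [abs_mul]
            exact mul_le_mul hB hbr0 (abs_nonneg _) dist_nonneg
      _ = 2 * n * dist q' r' := by ring
  -- conclude
  rw [div_le_iff₀ (by positivity)]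
  have h1 : ε ≤ ε * |(Dz:ℝ)| := le_mul_of_one_le_right hε.le hD1
  have h2 : ε * |(Dz:ℝ)| ≤ (s * n) * |(Dz:ℝ)| :=
    mul_le_mul_of_nonneg_right hsn.le (abs_nonneg _)
  have h3 : (n:ℝ) * (s * |(Dz:ℝ)|) ≤ (n:ℝ) * (2 * n * dist q' r') :=
    mul_le_mul_of_nonneg_left hKey hnR.le
  nlinarith [h1, h2, h3]
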